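/- Two orthonormal bases {|i⟩} and {|φ_i⟩} of H_C with U_C|i⟩ = |φ_i⟩ satisfy: the guarded composition of operator-valued functions F_1,...,F_n along {|φ_i⟩} evaluated at (δ_1,...,δ_n) equals (U_C ⊗ I_H) ∘ (guarded composition along {|i⟩} at (δ_1,...,δ_n)) ∘ (U_C† ⊗ I_H). -/

import Mathlib

noncomputable section
open scoped InnerProductSpace
open Finset

/-- Coordinate model of the tensor product `H_C ⊗ H` along a fixed orthonormal
basis of the `n`-dimensional coin space `H_C`. -/
abbrev TensorSp (n : ℕ) (H : Type*) [NormedAddCommGroup H] [InnerProductSpace ℂ H] : Type _ :=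
  PiLp 2 (fun _ : Fin n => H)

variable {n : ℕ} {H : Type*} [NormedAddCommGroup H] [InnerProductSpace ℂ H]

/-- the pure tensor `c ⊗ ψ`. -/
def pureTensor (c : EuclideanSpace ℂ (Fin n)) (ψ : H) : TensorSp n H :=
  WithLp.toLp 2 (fun i => c i • ψ)

/-- the block-diagonal operator `∑ᵢ |i⟩⟨i| ⊗ Uᵢ`, i.e. the guarded composition of
the `Uᵢ` along the computational basis of the coin space. -/
def blockDiag (U : Fin n → (H →ₗ[ℂ] H)) : TensorSp n H →ₗ[ℂ] TensorSp n H where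
  toFun x := WithLp.toLp 2 (fun i => U i (x i))
  map_add' x y := by ext i; simp
  map_smul' c x := by ext i; simp

/-- `A ⊗ B` in the coordinate model, `A` acting on the coin space. -/
def tensorOp (A : EuclideanSpace ℂ (Fin n) →ₗ[ℂ] EuclideanSpace ℂ (Fin n))
    (B : H →ₗ[ℂ] H) : TensorSp n H →ₗ[ℂ] TensorSp n H where
  toFun x := WithLp.toLp 2 (fun i => ∑ b : Fin n, A (EuclideanSpace.single b 1) i • B (x b))
  map_add' x y := by
    ext i; simp [map_add, smul_add, Finset.sum_add_distrib]
  map_smul' c x := by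
    ext i; simp [map_smul, Finset.smul_sum, smul_comm c]

/-- `A ⊗ I_H`. -/
def tensorLeft (A : EuclideanSpace ℂ (Fin n) →ₗ[ℂ] EuclideanSpace ℂ (Fin n)) :
    TensorSp n H →ₗ[ℂ] TensorSp n H :=
  tensorOp A LinearMap.id

/-- A linear operator is unitary iff it preserves inner products and is bijective. -/
def IsUnitaryOp {E : Type*} [NormedAddCommGroup E] [InnerProductSpace ℂ E]
    (A : E →ₗ[ℂ] E) : Prop :=
  (∀ x y : E, ⟪A x, A y⟫_ℂ = ⟪x, y⟫_ℂ) ∧ Function.Bijective A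

/-- Positive (semidefinite) operator. -/
def IsPosOp {E : Type*} [NormedAddCommGroup E] [InnerProductSpace ℂ E]
    (A : E →ₗ[ℂ] E) : Prop :=
  ∀ x : E, (⟪x, A x⟫_ℂ).im = 0 ∧ 0 ≤ (⟪x, A x⟫_ℂ).re

/-- Löwner order `A ⊑ B`. -/
def Loewner {E : Type*} [NormedAddCommGroup E] [InnerProductSpace ℂ E]
    (A B : E →ₗ[ℂ] E) : Prop :=
  IsPosOp (B - A)

section guarded
variable [FiniteDimensional ℂ H] {Δ : Fin n → Type*} [∀ k, Fintype (Δ k)]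

/-- the coefficients `λ_{kδ}`. -/
def lam (F : ∀ k, Δ k → (H →ₗ[ℂ] H)) (k : Fin n) (δ : Δ k) : ℝ :=
  Real.sqrt ((LinearMap.trace ℂ H (LinearMap.adjoint (F k δ) ∘ₗ F k δ)).re /
    ∑ τ : Δ k, (LinearMap.trace ℂ H (LinearMap.adjoint (F k τ) ∘ₗ F k τ)).re)

/-- the guarded composition `□ᵢ |i⟩ → Fᵢ` of operator-valued functions, evaluated at
`⊕ᵢ δᵢ`. -/
def guardedComp (F : ∀ k, Δ k → (H →ₗ[ℂ] H)) (δ : ∀ k, Δ k) :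
    TensorSp n H →ₗ[ℂ] TensorSp n H where
  toFun x := WithLp.toLp 2 (fun i => (∏ k ∈ Finset.univ.erase i, lam F k (δ k)) • F i (δ i) (x i))
  map_add' x y := by ext i; simp [map_add, smul_add]
  map_smul' c x := by
    ext i; simp [map_smul, smul_comm c]

end guarded

/-- partial trace over the coin space of an operator on `H_C ⊗ H`. -/
def coinProj (i : Fin n) : TensorSp n H →ₗ[ℂ] H where
  toFun x := x i
  map_add' _ _ := rfl
  map_smul' _ _ := rfl

def coinIncl (i : Fin n) : H →ₗ[ℂ] TensorSp n H where
  toFun ψ := WithLp.toLp 2 (Pi.single i ψ)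
  map_add' x y := by ext j; by_cases h : j = i <;> simp [h]
  map_smul' c x := by ext j; by_cases h : j = i <;> simp [h]

def trCoin (A : TensorSp n H →ₗ[ℂ] TensorSp n H) : H →ₗ[ℂ] H :=
  ∑ i : Fin n, coinProj i ∘ₗ A ∘ₗ coinIncl i

/-- the outer product `|x⟩⟨y|`. -/
def outer {E : Type*} [NormedAddCommGroup E] [InnerProductSpace ℂ E]
    (x y : E) : E →ₗ[ℂ] E :=
  ((innerSL ℂ y).toLinearMap).smulRight x



lemma euclid_decomp {n : ℕ} (x : EuclideanSpace ℂ (Fin n)) :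
    ∑ b : Fin n, x b • EuclideanSpace.single b (1:ℂ) = x := by
  ext j
  rw [WithLp.ofLp_sum, Finset.sum_apply]
  simp [EuclideanSpace.single_apply]

lemma pureTensor_add_left (c d : EuclideanSpace ℂ (Fin n)) (ψ : H) :
    pureTensor (c + d) ψ = pureTensor c ψ + pureTensor d ψ := by
  ext i; simp [pureTensor, add_smul]

lemma pureTensor_smul_left (a : ℂ) (c : EuclideanSpace ℂ (Fin n)) (ψ : H) :
    pureTensor (a • c) ψ = a • pureTensor c ψ := by
  ext i; simp [pureTensor, smul_smul]

lemma pureTensor_sum_left {ι : Type*} [DecidableEq ι] (s : Finset ι) (a : ι → ℂ)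
    (v : ι → EuclideanSpace ℂ (Fin n)) (ψ : H) :
    pureTensor (∑ j ∈ s, a j • v j) ψ = ∑ j ∈ s, a j • pureTensor (v j) ψ := by
  induction s using Finset.induction with
  | empty => ext k; simp [pureTensor]
  | insert _ _ hnot ih =>
      rw [Finset.sum_insert hnot, Finset.sum_insert hnot, pureTensor_add_left,
        pureTensor_smul_left, ih]

lemma pureTensor_single (i : Fin n) (ψ : H) :
    pureTensor (EuclideanSpace.single i (1:ℂ)) ψ = WithLp.toLp 2 (Pi.single i ψ) := by
  ext j
  by_cases h : j = i
  · subst h; simp [pureTensor, EuclideanSpace.single_apply]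
  · simp [pureTensor, EuclideanSpace.single_apply, h, Pi.single_eq_of_ne h]

lemma pureTensor_smul_right_real (r : ℝ) (c : EuclideanSpace ℂ (Fin n)) (ψ : H) :
    pureTensor c (r • ψ) = r • pureTensor c ψ := by
  ext i; exact smul_comm _ _ _

lemma tensorLeft_pureTensor (A : EuclideanSpace ℂ (Fin n) →ₗ[ℂ] EuclideanSpace ℂ (Fin n))
    (c : EuclideanSpace ℂ (Fin n)) (ψ : H) :
    tensorLeft A (pureTensor c ψ) = pureTensor (A c) ψ := by
  ext i
  have hc : A c = ∑ b : Fin n, c b • A (EuclideanSpace.single b (1:ℂ)) := by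
    conv_lhs => rw [← euclid_decomp c]
    rw [map_sum]
    simp_rw [map_smul]
  show ∑ b : Fin n, A (EuclideanSpace.single b 1) i • LinearMap.id ((pureTensor c ψ) b)
      = (A c) i • ψ
  rw [hc, WithLp.ofLp_sum, Finset.sum_apply, Finset.sum_smul]
  simp only [LinearMap.id_coe, id_eq, pureTensor, PiLp.toLp_apply, PiLp.smul_apply, smul_smul, smul_eq_mul]
  exact Finset.sum_congr rfl fun b _ => by ring_nf

lemma ext_on_single (T S : TensorSp n H →ₗ[ℂ] TensorSp n H)
    (h : ∀ (i : Fin n) (ψ : H), T (WithLp.toLp 2 (Pi.single i ψ)) = S (WithLp.toLp 2 (Pi.single i ψ))) : T = S := by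
  apply LinearMap.ext; intro x
  have hx : x = ∑ i : Fin n, WithLp.toLp 2 (Pi.single i (x i) : ∀ _ : Fin n, H) := by
    ext j; simp [WithLp.ofLp_sum, Pi.single_apply]
  rw [hx, map_sum, map_sum]
  exact Finset.sum_congr rfl fun i _ => h i (x i)

lemma guardedComp_single [FiniteDimensional ℂ H] {Δ : Fin n → Type*} [∀ k, Fintype (Δ k)]
    (F : ∀ k, Δ k → (H →ₗ[ℂ] H)) (δ : ∀ k, Δ k) (i : Fin n) (ψ : H) :
    guardedComp F δ (WithLp.toLp 2 (Pi.single i ψ))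
      = WithLp.toLp 2 (Pi.single i ((∏ k ∈ Finset.univ.erase i, lam F k (δ k)) • F i (δ i) ψ)) := by
  ext j
  show (∏ k ∈ Finset.univ.erase j, lam F k (δ k)) •
      F j (δ j) ((Pi.single i ψ : ∀ _ : Fin n, H) j) = _
  by_cases h : j = i
  · subst h; simp
  · simp [Pi.single_eq_of_ne h]

/-- change of coin basis for the guarded composition of operator-valued
functions: the composition along `{|φᵢ⟩ = U_C|i⟩}` (characterized by its action on the
pure tensors `|φᵢ⟩⊗ψ`) equals `(U_C ⊗ I) ∘ (composition along {|i⟩}) ∘ (U_C† ⊗ I)`. -/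
theorem guardedComp_change_of_basis {n : ℕ} {H : Type*} [NormedAddCommGroup H]
    [InnerProductSpace ℂ H] [FiniteDimensional ℂ H]
    {Δ : Fin n → Type*} [∀ k, Fintype (Δ k)] (F : ∀ k, Δ k → (H →ₗ[ℂ] H))
    (hovf : ∀ k, Loewner (∑ δ : Δ k, LinearMap.adjoint (F k δ) ∘ₗ F k δ) LinearMap.id)
    (UC : EuclideanSpace ℂ (Fin n) ≃ₗᵢ[ℂ] EuclideanSpace ℂ (Fin n))
    (W : (∀ k, Δ k) → (TensorSp n H →ₗ[ℂ] TensorSp n H))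
    (hW : ∀ (δ : ∀ k, Δ k) (i : Fin n) (ψ : H),
      W δ (pureTensor (UC (EuclideanSpace.single i 1)) ψ)
        = (∏ k ∈ Finset.univ.erase i, lam F k (δ k)) •
            pureTensor (UC (EuclideanSpace.single i 1)) (F i (δ i) ψ)) :
    ∀ δ : (∀ k, Δ k),
      W δ = tensorLeft UC.toLinearEquiv.toLinearMap ∘ₗ guardedComp F δ ∘ₗ
              tensorLeft UC.symm.toLinearEquiv.toLinearMap := by
  intro δ
  have ext_on_UC : ∀ T S : TensorSp n H →ₗ[ℂ] TensorSp n H,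
      (∀ (i : Fin n) (ψ : H),
        T (pureTensor (UC (EuclideanSpace.single i 1)) ψ)
          = S (pureTensor (UC (EuclideanSpace.single i 1)) ψ)) → T = S := by
    intro T S h
    apply ext_on_single
    intro i ψ
    have hi : (EuclideanSpace.single i (1:ℂ))
        = ∑ j : Fin n, (UC.symm (EuclideanSpace.single i 1)) j •
            UC (EuclideanSpace.single j (1:ℂ)) := by
      conv_lhs => rw [← UC.apply_symm_apply (EuclideanSpace.single i 1),
        ← euclid_decomp (UC.symm (EuclideanSpace.single i 1))]
      rw [map_sum]
      simp_rw [LinearIsometryEquiv.map_smul]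
    have hx : (WithLp.toLp 2 (Pi.single i ψ) : TensorSp n H)
        = ∑ j : Fin n, (UC.symm (EuclideanSpace.single i 1)) j •
            pureTensor (UC (EuclideanSpace.single j 1)) ψ := by
      rw [← pureTensor_single]
      conv_lhs => rw [hi]
      rw [pureTensor_sum_left]
    rw [hx, map_sum, map_sum]
    exact Finset.sum_congr rfl fun j _ => by rw [map_smul, map_smul, h]
  apply ext_on_UC
  intro i ψ
  rw [hW]
  simp only [LinearMap.comp_apply]
  have h1 : tensorLeft UC.symm.toLinearEquiv.toLinearMap
      (pureTensor (UC (EuclideanSpace.single i 1)) ψ) = (WithLp.toLp 2 (Pi.single i ψ) : TensorSp n H) := by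
    rw [tensorLeft_pureTensor, ← pureTensor_single]
    simp
  rw [h1, guardedComp_single, ← pureTensor_single, pureTensor_smul_right_real,
    LinearMap.map_smul_of_tower, tensorLeft_pureTensor]

  rfl
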